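/- If X̂ = x̂ x̂ᴴ is a rank-1 positive semidefinite solution of the semidefinite program minimizing trace(C X) subject to diag(X) = b̃ and X ⪰ 0 (where C = [A,−y]ᴴ[A,−y] and b̃ = [b₁²,…,b_K²,1]), then the vector ŝ = x̂_{1:K} / x̂_{K+1} satisfies |ŝ_k| = b_k for all k and minimizes ‖A s − y‖₂² over all s ∈ ℂ^K with |s_k| = b_k for all k. -/

import Mathlib

open Matrix ComplexOrder

lemma trace_aux {M n : ℕ} (B : Matrix (Fin M) (Fin n) ℂ) (v : Fin n → ℂ) :
    ((Bᴴ * B * Matrix.vecMulVec v (fun j => star (v j))).trace).re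
      = ∑ m, ‖B.mulVec v m‖ ^ 2 := by
  have h : (Bᴴ * B * Matrix.vecMulVec v (fun j => star (v j))).trace
      = star v ⬝ᵥ ((Bᴴ * B).mulVec v) := by
    rw [Matrix.vecMulVec_eq Unit v _, ← Matrix.mul_assoc, Matrix.trace_mul_comm]
    simp [Matrix.trace, Matrix.mul_apply, Matrix.replicateRow, Matrix.replicateCol, Matrix.mulVec, dotProduct,
      Finset.mul_sum, Finset.sum_mul]
  rw [h, ← Matrix.mulVec_mulVec, Matrix.dotProduct_mulVec, Matrix.vecMul_conjTranspose, star_star]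
  simp [dotProduct, Complex.re_sum, Pi.star_apply, ← Complex.normSq_eq_norm_sq,
    Complex.normSq_apply, Complex.mul_re]

lemma psd_aux {n : ℕ} (v : Fin n → ℂ) :
    (Matrix.vecMulVec v (fun j => star (v j))).PosSemidef := by
  have h : Matrix.vecMulVec v (fun j => star (v j))
      = (Matrix.replicateRow Unit (fun j => star (v j)))ᴴ * Matrix.replicateRow Unit (fun j => star (v j)) := by
    ext i j
    simp [Matrix.vecMulVec_apply, Matrix.mul_apply, Matrix.replicateRow, Matrix.conjTranspose_apply]
  rw [h]
  exact Matrix.posSemidef_conjTranspose_mul_self _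

/-- If the SDP relaxation has a rank-1 solution X̂ = x̂x̂ᴴ, then ŝ = x̂_{1:K}/x̂_{K+1}
is feasible and globally solves the phase least-squares problem. -/
theorem sdp_rank_one_solution_solves_phase_ls (M K : ℕ)
    (A : Matrix (Fin M) (Fin K) ℂ) (y : Fin M → ℂ) (b : Fin K → ℝ)
    (hb : ∀ k, 0 < b k)
    (Atil : Matrix (Fin M) (Fin (K + 1)) ℂ)
    (hAtil : Atil = fun m => Fin.snoc (fun k => A m k) (-y m))
    (C : Matrix (Fin (K + 1)) (Fin (K + 1)) ℂ) (hC : C = Atilᴴ * Atil)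
    (btil : Fin (K + 1) → ℂ) (hbtil : btil = Fin.snoc (fun k => ((b k : ℂ)) ^ 2) 1)
    (feasible : Matrix (Fin (K + 1)) (Fin (K + 1)) ℂ → Prop)
    (hfeas : feasible = fun X => X.PosSemidef ∧ ∀ i, X i i = btil i)
    (xhat : Fin (K + 1) → ℂ)
    (Xhat : Matrix (Fin (K + 1)) (Fin (K + 1)) ℂ)
    (hXhat : Xhat = Matrix.vecMulVec xhat (fun j => star (xhat j)))
    (hXfeas : feasible Xhat)
    (hXopt : ∀ X, feasible X → ((C * Xhat).trace).re ≤ ((C * X).trace).re)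
    (shat : Fin K → ℂ)
    (hshat : shat = fun k => xhat k.castSucc / xhat (Fin.last K)) :
    (∀ k, ‖shat k‖ = b k) ∧
      ∀ s : Fin K → ℂ, (∀ k, ‖s k‖ = b k) →
        ∑ m, ‖(A.mulVec shat - y) m‖ ^ 2 ≤
          ∑ m, ‖(A.mulVec s - y) m‖ ^ 2 := by
  rw [hfeas] at hXfeas
  obtain ⟨-, hdiag⟩ := hXfeas
  -- diagonal facts
  have hlast : ‖xhat (Fin.last K)‖ = 1 := by
    have h := hdiag (Fin.last K)
    rw [hXhat, hbtil] at h
    simp [Matrix.vecMulVec_apply, Complex.mul_conj] at h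
    have : Complex.normSq (xhat (Fin.last K)) = 1 := by exact_mod_cast h
    rw [← Complex.sq_norm] at this
    nlinarith [norm_nonneg (xhat (Fin.last K))]
  have hlast0 : xhat (Fin.last K) ≠ 0 := by
    intro h0; rw [h0] at hlast; simp at hlast
  have hcast : ∀ k : Fin K, ‖xhat k.castSucc‖ = b k := by
    intro k
    have h := hdiag k.castSucc
    rw [hXhat, hbtil] at h
    simp [Matrix.vecMulVec_apply, Complex.mul_conj] at h
    have h2 : (Complex.normSq (xhat k.castSucc) : ℂ) = ((b k ^ 2 : ℝ) : ℂ) := by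
      push_cast; exact h
    have h3 : Complex.normSq (xhat k.castSucc) = b k ^ 2 := by exact_mod_cast h2
    rw [← Complex.sq_norm] at h3
    rw [← Real.sqrt_sq (norm_nonneg _), h3, Real.sqrt_sq (hb k).le]
  have habs : ∀ k, ‖shat k‖ = b k := by
    intro k
    rw [hshat]
    simp [norm_div, hlast, hcast k]
  refine ⟨habs, ?_⟩
  intro s hs
  -- mulVec of snoc
  have hmv : ∀ (t : Fin K → ℂ), Atil.mulVec (Fin.snoc t 1) = A.mulVec t - y := by
    intro t
    funext m
    rw [hAtil]
    simp [Matrix.mulVec, dotProduct, Fin.sum_univ_castSucc]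
    ring
  -- xhat = xhat_last • snoc shat 1
  have hx : xhat = xhat (Fin.last K) • (Fin.snoc shat 1 : Fin (K+1) → ℂ) := by
    funext j
    refine Fin.lastCases ?_ ?_ j
    · simp [mul_comm]
    · intro k
      simp [hshat, Pi.smul_apply, smul_eq_mul]
      field_simp
  -- feasibility of competitor
  set v : Fin (K + 1) → ℂ := Fin.snoc s 1 with hv
  have hfeasX : feasible (Matrix.vecMulVec v (fun j => star (v j))) := by
    rw [hfeas]
    refine ⟨psd_aux v, ?_⟩
    intro i
    rw [hbtil]
    refine Fin.lastCases ?_ ?_ i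
    · simp [Matrix.vecMulVec_apply, hv]
    · intro k
      have hns : Complex.normSq (s k) = b k ^ 2 := by
        rw [← Complex.sq_norm, hs k]
      simp only [Matrix.vecMulVec_apply, hv, Fin.snoc_castSucc, Fin.snoc_last,
        RCLike.star_def, Complex.mul_conj, hns]
      push_cast
      ring
  have hle := hXopt _ hfeasX
  rw [hXhat, hC, trace_aux, trace_aux] at hle
  have hsum1 : ∑ m, ‖Atil.mulVec xhat m‖ ^ 2
      = ∑ m, ‖(A.mulVec shat - y) m‖ ^ 2 := by
    refine Finset.sum_congr rfl fun m _ => ?_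
    rw [hx, Matrix.mulVec_smul, Pi.smul_apply, smul_eq_mul, norm_mul, hlast, one_mul, hmv]
  have hsum2 : ∑ m, ‖Atil.mulVec v m‖ ^ 2
      = ∑ m, ‖(A.mulVec s - y) m‖ ^ 2 := by
    rw [hv, hmv]
  rw [hsum1, hsum2] at hle
  exact hle
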